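/- Fix integers 1 ≤ k and n ≥ 1. Let v : {1,…,n} → ℝ_{≥0} be injective, let σ be a uniformly random permutation of {1,…,n}, and let w_i = v(σ(i)) be the arrival sequence. Then for every randomized rank-based online algorithm that accepts at most k arrivals, the probability that the arrival carrying the maximum value max_i v(i) is accepted is at most (1 + 1/n)·(1 − e^{−k}). -/

import Mathlib

open MeasureTheory Finset

/-- A randomized rank-based online algorithm with capacity `k`: it receives a uniform random
seed `u ∈ [0,1]` and the arrival sequence `w`, outputs a set of at most `k` arrivals, its
decision about arrival `i` depends only on the seed and the relative order of `w₁,…,wᵢ`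
(which also makes it online), and it is measurable in the seed. -/
structure RankAlg (n k : ℕ) where
  run : ℝ → (Fin n → ℝ) → Finset (Fin n)
  card_le : ∀ u w, (run u w).card ≤ k
  rankBased : ∀ u (w w' : Fin n → ℝ) (i : Fin n),
    (∀ j j' : Fin n, j ≤ i → j' ≤ i → (w j < w j' ↔ w' j < w' j')) →
    (i ∈ run u w ↔ i ∈ run u w')
  meas : ∀ (i : Fin n) (w : Fin n → ℝ), MeasurableSet {u : ℝ | i ∈ run u w}

namespace SecAux
variable {n : ℕ}

noncomputable def trfFun (S T : Finset (Fin n)) (h : T.card = S.card) (x : Fin n) : Fin n :=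
  if hx : x ∈ S then (T.orderIsoOfFin h ((S.orderIsoOfFin rfl).symm ⟨x, hx⟩) : Fin n)
  else ((Tᶜ).orderIsoOfFin (by simp [Finset.card_compl, h])
    (((Sᶜ).orderIsoOfFin rfl).symm ⟨x, by simpa using hx⟩) : Fin n)

lemma trfFun_mem {S T : Finset (Fin n)} (h : T.card = S.card) {x : Fin n} (hx : x ∈ S) :
    trfFun S T h x ∈ T := by
  rw [trfFun, dif_pos hx]; exact Finset.coe_mem _

lemma trfFun_not_mem {S T : Finset (Fin n)} (h : T.card = S.card) {x : Fin n} (hx : x ∉ S) :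
    trfFun S T h x ∉ T := by
  rw [trfFun, dif_neg hx]
  have := Finset.coe_mem (((Tᶜ).orderIsoOfFin (by simp [Finset.card_compl, h] : (Tᶜ).card = (Sᶜ).card))
    (((Sᶜ).orderIsoOfFin rfl).symm ⟨x, by simpa using hx⟩))
  rw [Finset.mem_compl] at this
  exact this

lemma trfFun_lt_iff {S T : Finset (Fin n)} (h : T.card = S.card) {x y : Fin n}
    (hx : x ∈ S) (hy : y ∈ S) : trfFun S T h x < trfFun S T h y ↔ x < y := by
  rw [trfFun, dif_pos hx, trfFun, dif_pos hy]
  rw [show ∀ (a b : {z // z ∈ T}), ((a : Fin n) < b ↔ a < b) from fun a b => Subtype.coe_lt_coe,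
    OrderIso.lt_iff_lt, OrderIso.lt_iff_lt]
  exact Subtype.mk_lt_mk

lemma trfFun_injective {S T : Finset (Fin n)} (h : T.card = S.card) :
    Function.Injective (trfFun S T h) := by
  intro x y hxy
  by_cases hx : x ∈ S <;> by_cases hy : y ∈ S
  · rw [trfFun, dif_pos hx, trfFun, dif_pos hy] at hxy
    have := (S.orderIsoOfFin rfl).symm.injective ((T.orderIsoOfFin h).injective
      (Subtype.coe_injective hxy))
    simpa using congrArg Subtype.val this
  · exact absurd (trfFun_mem h hx) (hxy ▸ trfFun_not_mem h hy)
  · exact absurd (trfFun_mem h hy) (hxy.symm ▸ trfFun_not_mem h hx)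
  · rw [trfFun, dif_neg hx, trfFun, dif_neg hy] at hxy
    have := ((Sᶜ).orderIsoOfFin rfl).symm.injective (((Tᶜ).orderIsoOfFin _).injective
      (Subtype.coe_injective hxy))
    simpa using congrArg Subtype.val this

noncomputable def trfE (S T : Finset (Fin n)) (h : T.card = S.card) : Equiv.Perm (Fin n) :=
  Equiv.ofBijective (trfFun S T h) (Finite.injective_iff_bijective.mp (trfFun_injective h))

noncomputable def trf (S T : Finset (Fin n)) : Equiv.Perm (Fin n) :=
  if h : T.card = S.card then trfE S T h else Equiv.refl _

lemma trf_mem {S T : Finset (Fin n)} (h : T.card = S.card) {x : Fin n} (hx : x ∈ S) :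
    trf S T x ∈ T := by rw [trf, dif_pos h]; exact trfFun_mem h hx

lemma trf_not_mem {S T : Finset (Fin n)} (h : T.card = S.card) {x : Fin n} (hx : x ∉ S) :
    trf S T x ∉ T := by rw [trf, dif_pos h]; exact trfFun_not_mem h hx

lemma trf_lt_iff {S T : Finset (Fin n)} (h : T.card = S.card) {x y : Fin n}
    (hx : x ∈ S) (hy : y ∈ S) : trf S T x < trf S T y ↔ x < y := by
  rw [trf, dif_pos h]; exact trfFun_lt_iff h hx hy

lemma trf_image {S T : Finset (Fin n)} (h : T.card = S.card) :
    S.image (trf S T) = T := by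
  apply Finset.eq_of_subset_of_card_le
  · intro y hy
    rcases Finset.mem_image.mp hy with ⟨x, hx, rfl⟩
    exact trf_mem h hx
  · rw [Finset.card_image_of_injective _ (trf S T).injective, h]

attribute [irreducible] trf

variable {k : ℕ}

set_option maxHeartbeats 1000000 in
lemma key (Alg : RankAlg n k) (v : Fin n → ℝ) (hv : StrictMono v) (istar : Fin n)
    (htop : ∀ a : Fin n, a ≤ istar) (u : ℝ) (p : Fin n) :
    n * ((univ : Finset (Equiv.Perm (Fin n))).filter
        (fun σ => σ p = istar ∧ p ∈ Alg.run u (fun i => v (σ i)))).card ≤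
    (p.1 + 1) * ((univ : Finset (Equiv.Perm (Fin n))).filter
        (fun σ => p ∈ Alg.run u (fun i => v (σ i)) ∧ ∀ j ≤ p, σ j ≤ σ p)).card := by
  classical
  set A := (univ : Finset (Equiv.Perm (Fin n))).filter
      (fun σ => σ p = istar ∧ p ∈ Alg.run u (fun i => v (σ i))) with hA
  set B := (univ : Finset (Equiv.Perm (Fin n))).filter
      (fun σ => p ∈ Alg.run u (fun i => v (σ i)) ∧ ∀ j ≤ p, σ j ≤ σ p) with hB
  set Φ : Fin n × Equiv.Perm (Fin n) → Equiv.Perm (Fin n) × Fin n := fun ct =>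
    if ct.1 ∈ (Iic p).image ct.2 then (ct.2, ct.2.symm ct.1)
    else
      (ct.2.trans (trf ((Iic p).image ct.2)
          (insert ct.1 ((((Iic p).image ct.2)).erase istar))),
        (ct.2.trans (trf ((Iic p).image ct.2)
          (insert ct.1 ((((Iic p).image ct.2)).erase istar)))).symm ct.1) with hΦ
  have main : ∀ (c : Fin n) (τ : Equiv.Perm (Fin n)), τ ∈ A →
      (Φ (c, τ)).1 ∈ B ∧ (Φ (c, τ)).2 ∈ Iic p ∧ (Φ (c, τ)).1 ((Φ (c, τ)).2) = c ∧
      ((Φ (c, τ)).1 p = istar ↔ c ∈ (Iic p).image τ) := by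
    intro c τ hτ
    obtain ⟨-, hτp, hacc⟩ := Finset.mem_filter.mp hτ
    set S := (Iic p).image τ with hS
    by_cases hc : c ∈ S
    · have hΦval : Φ (c, τ) = (τ, τ.symm c) := by rw [hΦ]; exact if_pos hc
      rw [hΦval]
      refine ⟨?_, ?_, ?_, ?_⟩
      · refine Finset.mem_filter.mpr ⟨Finset.mem_univ _, hacc, fun j hj => ?_⟩
        calc τ j ≤ istar := htop _
        _ = τ p := hτp.symm
      · rcases Finset.mem_image.mp hc with ⟨j₀, hj₀, rfl⟩
        rw [Equiv.symm_apply_apply]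
        exact hj₀
      · exact τ.apply_symm_apply c
      · simp [hτp, hc]
    · have histar : istar ∈ S := Finset.mem_image.mpr ⟨p, Finset.mem_Iic.mpr le_rfl, hτp⟩
      have hcne : c ≠ istar := fun h => hc (h ▸ histar)
      have hcnotE : c ∉ S.erase istar := fun h => hc (Finset.erase_subset _ _ h)
      set T := insert c (S.erase istar) with hTdef
      have hT : T.card = S.card := by
        rw [Finset.card_insert_of_notMem hcnotE, Finset.card_erase_of_mem histar]
        have : 1 ≤ S.card := Finset.card_pos.mpr ⟨istar, histar⟩
        omega
      have histarT : istar ∉ T := by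
        intro h
        rcases Finset.mem_insert.mp h with h | h
        · exact hcne h.symm
        · exact Finset.notMem_erase _ _ h
      set E := trf S T with hE
      set σ := τ.trans E with hσ
      have hmemS : ∀ j : Fin n, j ≤ p → τ j ∈ S :=
        fun j hj => Finset.mem_image_of_mem _ (Finset.mem_Iic.mpr hj)
      have hτpS : τ p ∈ S := hmemS p le_rfl
      have htopσ : ∀ j ≤ p, σ j ≤ σ p := by
        intro j hj
        show E (τ j) ≤ E (τ p)
        by_cases hji : τ j = istar
        · rw [hji, ← hτp]
        · have h1 : τ j < τ p := by
            rw [hτp]; exact lt_of_le_of_ne (htop _) hji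
          exact le_of_lt ((trf_lt_iff hT (hmemS j hj) hτpS).mpr h1)
      have haccσ : p ∈ Alg.run u (fun i => v (σ i)) := by
        refine (Alg.rankBased u (fun i => v (τ i)) (fun i => v (σ i)) p ?_).mp hacc
        intro j j' hj hj'
        show v (τ j) < v (τ j') ↔ v (σ j) < v (σ j')
        rw [hv.lt_iff_lt, hv.lt_iff_lt]
        exact (trf_lt_iff hT (hmemS j hj) (hmemS j' hj')).symm
      have himgσ : (Iic p).image σ = T := by
        have h1 : (Iic p).image ⇑σ = S.image ⇑E := by
          rw [hS, Finset.image_image]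
          rfl
        rw [h1, hE, trf_image hT]
      have hΦval : Φ (c, τ) = (σ, σ.symm c) := by rw [hΦ]; exact if_neg hc
      rw [hΦval]
      have hcT : c ∈ T := Finset.mem_insert_self _ _
      refine ⟨Finset.mem_filter.mpr ⟨Finset.mem_univ _, haccσ, htopσ⟩, ?_, σ.apply_symm_apply c, ?_⟩
      · have : c ∈ (Iic p).image σ := himgσ ▸ hcT
        rcases Finset.mem_image.mp this with ⟨j₀, hj₀, hj⟩
        rw [← hj, Equiv.symm_apply_apply]
        exact hj₀
      · constructor
        · intro h
          exfalso
          apply histarT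
          have : σ p ∈ T := by
            have : σ p ∈ (Iic p).image σ :=
              Finset.mem_image_of_mem _ (Finset.mem_Iic.mpr le_rfl)
            rwa [himgσ] at this
          rwa [h] at this
        · intro h; exact absurd h hc
  have hmaps : ∀ ct ∈ (univ : Finset (Fin n)) ×ˢ A, Φ ct ∈ B ×ˢ Iic p := by
    rintro ⟨c, τ⟩ hct
    have hτ : τ ∈ A := (Finset.mem_product.mp hct).2
    obtain ⟨h1, h2, -, -⟩ := main c τ hτ
    exact Finset.mem_product.mpr ⟨h1, h2⟩
  have hinj : Set.InjOn Φ ↑((univ : Finset (Fin n)) ×ˢ A) := by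
    rintro ⟨c₁, τ₁⟩ h₁ ⟨c₂, τ₂⟩ h₂ heq
    rw [Finset.mem_coe, Finset.mem_product] at h₁ h₂
    have hτ₁ : τ₁ ∈ A := h₁.2
    have hτ₂ : τ₂ ∈ A := h₂.2
    obtain ⟨-, -, hc₁, hflag₁⟩ := main c₁ τ₁ hτ₁
    obtain ⟨-, -, hc₂, hflag₂⟩ := main c₂ τ₂ hτ₂
    obtain ⟨hτp₁, -⟩ := (Finset.mem_filter.mp hτ₁).2
    obtain ⟨hτp₂, -⟩ := (Finset.mem_filter.mp hτ₂).2
    have hcc : c₁ = c₂ := by rw [← hc₁, ← hc₂, heq]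
    have hflag : c₁ ∈ (Iic p).image τ₁ ↔ c₂ ∈ (Iic p).image τ₂ := by
      rw [← hflag₁, ← hflag₂, heq]
    by_cases hin : c₁ ∈ (Iic p).image τ₁
    · have hin₂ : c₂ ∈ (Iic p).image τ₂ := hflag.mp hin
      have e₁ : Φ (c₁, τ₁) = (τ₁, τ₁.symm c₁) := by rw [hΦ]; exact if_pos hin
      have e₂ : Φ (c₂, τ₂) = (τ₂, τ₂.symm c₂) := by rw [hΦ]; exact if_pos hin₂
      rw [e₁, e₂] at heq
      have : τ₁ = τ₂ := congrArg Prod.fst heq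
      rw [hcc, this]
    · have hin₂ : c₂ ∉ (Iic p).image τ₂ := fun h => hin (hflag.mpr h)
      subst hcc
      set c := c₁
      -- abbreviations for both sides
      have recover : ∀ (τ : Equiv.Perm (Fin n)), τ ∈ A → ∀ hc : c ∉ (Iic p).image τ,
          (Φ (c, τ)).1 = τ.trans (trf ((Iic p).image τ)
            (insert c ((((Iic p).image τ)).erase istar))) ∧
          (Iic p).image τ =
            insert istar (((Iic p).image ((Φ (c, τ)).1)).erase c) := by
        intro τ hτ hc
        obtain ⟨-, hτp, -⟩ := Finset.mem_filter.mp hτ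
        set S := (Iic p).image τ with hS
        have histar : istar ∈ S := Finset.mem_image.mpr ⟨p, Finset.mem_Iic.mpr le_rfl, hτp⟩
        have hcnotE : c ∉ S.erase istar := fun h => hc (Finset.erase_subset _ _ h)
        set T := insert c (S.erase istar) with hTdef
        have hT : T.card = S.card := by
          rw [Finset.card_insert_of_notMem hcnotE, Finset.card_erase_of_mem histar]
          have : 1 ≤ S.card := Finset.card_pos.mpr ⟨istar, histar⟩
          omega
        have hΦval : (Φ (c, τ)).1 = τ.trans (trf S T) := by rw [hΦ]; exact congrArg Prod.fst (if_neg hc)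
        refine ⟨hΦval, ?_⟩
        have himgσ : (Iic p).image ((Φ (c, τ)).1) = T := by
          rw [hΦval]
          have h1 : (Iic p).image ⇑(τ.trans (trf S T)) = S.image ⇑(trf S T) := by
            rw [hS, Finset.image_image]; rfl
          rw [h1, trf_image hT]
        rw [himgσ, hTdef, Finset.erase_insert hcnotE, Finset.insert_erase histar]
      obtain ⟨hrec₁, hSrec₁⟩ := recover τ₁ hτ₁ hin
      obtain ⟨hrec₂, hSrec₂⟩ := recover τ₂ hτ₂ hin₂
      have hfst : (Φ (c, τ₁)).1 = (Φ (c, τ₂)).1 := congrArg Prod.fst heq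
      have hSS : (Iic p).image τ₁ = (Iic p).image τ₂ := by
        rw [hSrec₁, hSrec₂, hfst]
      have hττ : τ₁ = τ₂ := by
        have h1 : τ₁.trans (trf ((Iic p).image τ₁)
            (insert c ((((Iic p).image τ₁)).erase istar))) =
          τ₂.trans (trf ((Iic p).image τ₁)
            (insert c ((((Iic p).image τ₁)).erase istar))) := by
          rw [← hrec₁, hfst, hrec₂, hSS]
        apply Equiv.ext
        intro x
        have := congrArg (fun e => e.toFun x) h1
        simpa using (trf _ _).injective this
      rw [hττ]
  have hcard := Finset.card_le_card_of_injOn Φ hmaps hinj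
  rw [Finset.card_product, Finset.card_product, Finset.card_univ, Fintype.card_fin,
    Fin.card_Iic] at hcard
  calc n * A.card ≤ B.card * (p.1 + 1) := hcard
  _ = (p.1 + 1) * B.card := mul_comm _ _

variable {n : ℕ}

set_option maxHeartbeats 1000000 in
lemma topcount (p : Fin n) :
    (p.1 + 1) * ((univ : Finset (Equiv.Perm (Fin n))).filter
        (fun σ => ∀ j ≤ p, σ j ≤ σ p)).card ≤ n.factorial := by
  classical
  set Top := (univ : Finset (Equiv.Perm (Fin n))).filter (fun σ => ∀ j ≤ p, σ j ≤ σ p) with hTop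
  set Ψ : Fin n × Equiv.Perm (Fin n) → Equiv.Perm (Fin n) :=
    fun rσ => (Equiv.swap p rσ.1).trans rσ.2 with hΨ
  have swaple : ∀ (r : Fin n), r ≤ p → ∀ j ≤ p, Equiv.swap p r j ≤ p := by
    intro r hr j hj
    rcases eq_or_ne j p with rfl | hjp
    · rw [Equiv.swap_apply_left]; exact hr
    · rcases eq_or_ne j r with rfl | hjr
      · rw [Equiv.swap_apply_right]
      · rw [Equiv.swap_apply_of_ne_of_ne hjp hjr]; exact hj
  have prop : ∀ (r : Fin n), r ≤ p → ∀ σ ∈ Top, ∀ j ≤ p, Ψ (r, σ) j ≤ Ψ (r, σ) r := by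
    intro r hr σ hσ j hj
    have hσ' := (Finset.mem_filter.mp hσ).2
    show σ (Equiv.swap p r j) ≤ σ (Equiv.swap p r r)
    rw [Equiv.swap_apply_right]
    exact hσ' _ (swaple r hr j hj)
  have hinj : Set.InjOn Ψ ↑((Iic p) ×ˢ Top) := by
    rintro ⟨r₁, σ₁⟩ h₁ ⟨r₂, σ₂⟩ h₂ heq
    rw [Finset.mem_coe, Finset.mem_product] at h₁ h₂
    have hr₁ : r₁ ≤ p := Finset.mem_Iic.mp h₁.1
    have hr₂ : r₂ ≤ p := Finset.mem_Iic.mp h₂.1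
    have k₁ := prop r₁ hr₁ σ₁ h₁.2
    have k₂ := prop r₂ hr₂ σ₂ h₂.2
    rw [heq] at k₁
    have hrr : r₁ = r₂ := by
      apply (Ψ (r₂, σ₂)).injective
      exact le_antisymm (k₂ r₁ hr₁) (k₁ r₂ hr₂)
    subst hrr
    have hσσ : σ₁ = σ₂ := by
      apply Equiv.ext
      intro x
      have := congrArg (fun e : Equiv.Perm (Fin n) => e ((Equiv.swap p r₁) x)) heq
      simpa [hΨ, Equiv.swap_apply_self] using this
    rw [hσσ]
  have hmaps : ∀ rσ ∈ (Iic p) ×ˢ Top, Ψ rσ ∈ (univ : Finset (Equiv.Perm (Fin n))) :=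
    fun _ _ => Finset.mem_univ _
  have hcard := Finset.card_le_card_of_injOn Ψ hmaps hinj
  rw [Finset.card_product, Finset.card_univ, Fintype.card_perm, Fintype.card_fin,
    Fin.card_Iic] at hcard
  calc (p.1 + 1) * Top.card = (↑p + 1) * Top.card := rfl
  _ ≤ n.factorial := hcard

lemma harmonic_log (a n : ℕ) (han : a ≤ n) :
    Real.log ((n:ℝ)+1) - Real.log ((a:ℝ)+1) ≤ ∑ j ∈ Ico a n, (1:ℝ)/((j:ℝ)+1) := by
  set F : ℕ → ℝ := fun i => Real.log ((a:ℝ)+1+(i:ℝ)) with hF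
  have tele : ∑ j ∈ Ico a n, (Real.log ((j:ℝ)+2) - Real.log ((j:ℝ)+1))
      = Real.log ((n:ℝ)+1) - Real.log ((a:ℝ)+1) := by
    rw [Finset.sum_Ico_eq_sum_range]
    have h1 : ∀ i ∈ range (n-a), Real.log (((a+i:ℕ):ℝ)+2) - Real.log (((a+i:ℕ):ℝ)+1)
        = F (i+1) - F i := by
      intro i _
      rw [hF]
      have e1 : (a:ℝ)+1+((i+1:ℕ):ℝ) = ((a+i:ℕ):ℝ)+2 := by push_cast; ring
      have e2 : (a:ℝ)+1+((i:ℕ):ℝ) = ((a+i:ℕ):ℝ)+1 := by push_cast; ring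
      simp only []
      rw [e1, e2]
    rw [Finset.sum_congr rfl h1, Finset.sum_range_sub F (n-a)]
    have e3 : (a:ℝ)+1+((n-a:ℕ):ℝ) = (n:ℝ)+1 := by push_cast [Nat.cast_sub han]; ring
    have e4 : (a:ℝ)+1+((0:ℕ):ℝ) = (a:ℝ)+1 := by norm_num
    rw [hF]
    simp only []
    rw [e3, e4]
  rw [← tele]
  apply Finset.sum_le_sum
  intro j _
  have hj1 : (0:ℝ) < (j:ℝ)+1 := by positivity
  have hj2 : (0:ℝ) < (j:ℝ)+2 := by positivity
  have h2 : (0:ℝ) < ((j:ℝ)+2)/((j:ℝ)+1) := by positivity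
  have h3 := Real.log_le_sub_one_of_pos h2
  rw [Real.log_div hj2.ne' hj1.ne'] at h3
  have h4 : ((j:ℝ)+2)/((j:ℝ)+1) - 1 = 1/((j:ℝ)+1) := by
    field_simp
    norm_num
  linarith

set_option maxHeartbeats 2000000 in
lemma lp_bound (n k : ℕ) (hn : 1 ≤ n) (hk : 1 ≤ k) (g : ℕ → ℝ)
    (hg0 : ∀ j : ℕ, 0 ≤ g j) (hg1 : ∀ j : ℕ, ((j:ℝ)+1) * g j ≤ 1)
    (hsum : ∑ j ∈ range n, g j ≤ (k:ℝ)) :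
    ∑ j ∈ range n, (((j:ℝ)+1)/(n:ℝ)) * g j ≤ (1 + 1/(n:ℝ)) * (1 - Real.exp (-(k:ℝ))) := by
  classical
  have hn0 : (0:ℝ) < n := by exact_mod_cast hn
  set T : ℕ → ℝ := fun a => ∑ j ∈ Ico a n, (1:ℝ)/((j:ℝ)+1) with hTdef
  have hex : ∃ a, T a ≤ (k:ℝ) := ⟨n, by simp [hTdef]⟩
  set a := Nat.find hex with ha
  have hTa : T a ≤ (k:ℝ) := Nat.find_spec hex
  have han : a ≤ n := Nat.find_min' hex (by simp [hTdef])
  have hlog : Real.log ((n:ℝ)+1) - Real.log ((a:ℝ)+1) ≤ T a := harmonic_log a n han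
  have hexp : Real.exp (-(T a)) ≤ ((a:ℝ)+1)/((n:ℝ)+1) := by
    have h1 : -(T a) ≤ Real.log ((a:ℝ)+1) - Real.log ((n:ℝ)+1) := by linarith
    calc Real.exp (-(T a)) ≤ Real.exp (Real.log ((a:ℝ)+1) - Real.log ((n:ℝ)+1)) :=
          Real.exp_le_exp.mpr h1
    _ = ((a:ℝ)+1)/((n:ℝ)+1) := by
        rw [Real.exp_sub, Real.exp_log (by positivity), Real.exp_log (by positivity)]
  have hmain : ((n:ℝ)+1) * Real.exp (-(k:ℝ)) ≤ 1 + (a:ℝ) - (a:ℝ) * ((k:ℝ) - T a) := by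
    rcases Nat.eq_zero_or_pos a with haz | haz
    · rw [haz] at hexp hTa
      rw [haz]
      push_cast
      have h1 : Real.exp (-(k:ℝ)) ≤ Real.exp (-(T 0)) := Real.exp_le_exp.mpr (by linarith)
      have h2 : Real.exp (-(T 0)) ≤ 1/((n:ℝ)+1) := by
        calc Real.exp (-(T 0)) ≤ (((0:ℕ):ℝ)+1)/((n:ℝ)+1) := hexp
        _ = 1/((n:ℝ)+1) := by norm_num
      have h3 : ((n:ℝ)+1) * Real.exp (-(k:ℝ)) ≤ ((n:ℝ)+1) * (1/((n:ℝ)+1)) := by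
        apply mul_le_mul_of_nonneg_left (by linarith) (by positivity)
      have h4 : ((n:ℝ)+1) * (1/((n:ℝ)+1)) = 1 := by field_simp
      linarith
    · have hapos : (0:ℝ) < a := by exact_mod_cast haz
      have hfind := Nat.find_min hex (show a - 1 < a by omega)
      have hTlt : (k:ℝ) < T (a-1) := lt_of_not_ge hfind
      have hTs : T (a-1) = 1/(a:ℝ) + T a := by
        have h0 : T (a-1) = ∑ j ∈ Ico (a-1) n, (1:ℝ)/((j:ℝ)+1) := rfl
        rw [h0, Finset.sum_eq_sum_Ico_succ_bot (show a-1 < n by omega)]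
        have e1 : a - 1 + 1 = a := by omega
        rw [e1]
        have e3 : ((a-1:ℕ):ℝ)+1 = (a:ℝ) := by push_cast [Nat.cast_sub haz]; ring
        rw [e3]
      set ε := (k:ℝ) - T a with hεdef
      have hε0 : 0 ≤ ε := by linarith
      have h5 : ε < 1/(a:ℝ) := by rw [hTs] at hTlt; rw [hεdef]; linarith
      have hεa : (a:ℝ) * ε ≤ 1 := by
        have := mul_lt_mul_of_pos_left h5 hapos
        rw [mul_one_div, div_self hapos.ne'] at this
        linarith
      set s := (a:ℝ) * ε with hsdef
      have hs0 : 0 ≤ s := by positivity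
      have chord : Real.exp (-ε) ≤ 1 - s + s * Real.exp (-(1/(a:ℝ))) := by
        have hcx := convexOn_exp.2 (Set.mem_univ (0:ℝ)) (Set.mem_univ (-(1/(a:ℝ))))
          (by linarith : (0:ℝ) ≤ 1 - s) hs0 (by ring)
        have harg : (1-s) • (0:ℝ) + s • (-(1/(a:ℝ))) = -ε := by
          simp only [smul_eq_mul, mul_zero, zero_add, mul_neg]
          rw [hsdef, mul_one_div, mul_comm (a:ℝ) ε, mul_div_assoc, div_self hapos.ne']
          ring
        rw [harg] at hcx
        simpa [Real.exp_zero, smul_eq_mul] using hcx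
      have hea : Real.exp (-(1/(a:ℝ))) ≤ (a:ℝ)/((a:ℝ)+1) := by
        have h1 := Real.add_one_le_exp (1/(a:ℝ))
        have h2 : Real.exp (-(1/(a:ℝ))) * Real.exp (1/(a:ℝ)) = 1 := by
          rw [← Real.exp_add]; simp
        have h3 : (0:ℝ) < Real.exp (-(1/(a:ℝ))) := Real.exp_pos _
        have h5' : (a:ℝ) * (1/(a:ℝ)) = 1 := by field_simp
        have h6 : Real.exp (-(1/(a:ℝ))) * (1/(a:ℝ)+1) ≤ 1 := by nlinarith
        rw [le_div_iff₀ (show (0:ℝ) < (a:ℝ)+1 by positivity)]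
        nlinarith [mul_le_mul_of_nonneg_left h6 hapos.le]
      have hsplit : Real.exp (-(k:ℝ)) = Real.exp (-(T a)) * Real.exp (-ε) := by
        rw [← Real.exp_add]
        congr 1
        rw [hεdef]; ring
      have step1 : ((n:ℝ)+1) * Real.exp (-(k:ℝ)) ≤ ((a:ℝ)+1) * Real.exp (-ε) := by
        rw [hsplit, ← mul_assoc]
        apply mul_le_mul_of_nonneg_right _ (Real.exp_pos _).le
        calc ((n:ℝ)+1) * Real.exp (-(T a)) ≤ ((n:ℝ)+1) * (((a:ℝ)+1)/((n:ℝ)+1)) :=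
              mul_le_mul_of_nonneg_left hexp (by positivity)
        _ = (a:ℝ)+1 := by field_simp
      have step2 : ((a:ℝ)+1) * Real.exp (-ε) ≤ ((a:ℝ)+1) * (1 - s + s * ((a:ℝ)/((a:ℝ)+1))) := by
        apply mul_le_mul_of_nonneg_left _ (by positivity)
        calc Real.exp (-ε) ≤ 1 - s + s * Real.exp (-(1/(a:ℝ))) := chord
        _ ≤ 1 - s + s * ((a:ℝ)/((a:ℝ)+1)) := by
            have := mul_le_mul_of_nonneg_left hea hs0
            linarith
      have step3 : ((a:ℝ)+1) * (1 - s + s * ((a:ℝ)/((a:ℝ)+1))) = 1 + (a:ℝ) - s := by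
        field_simp
        ring
      rw [hsdef] at step3
      calc ((n:ℝ)+1) * Real.exp (-(k:ℝ)) ≤ ((a:ℝ)+1) * Real.exp (-ε) := step1
      _ ≤ ((a:ℝ)+1) * (1 - s + s * ((a:ℝ)/((a:ℝ)+1))) := step2
      _ = 1 + (a:ℝ) - (a:ℝ) * ε := step3
      _ = 1 + (a:ℝ) - (a:ℝ) * ((k:ℝ) - T a) := by rw [hεdef]
  -- dual bound
  have gle : ∀ j : ℕ, g j ≤ 1/((j:ℝ)+1) := by
    intro j
    rw [le_div_iff₀ (by positivity : (0:ℝ) < (j:ℝ)+1)]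
    calc g j * ((j:ℝ)+1) = ((j:ℝ)+1) * g j := mul_comm _ _
    _ ≤ 1 := hg1 j
  have hIco : (range n).filter (fun j => a ≤ j) = Ico a n := by
    ext j
    simp only [Finset.mem_filter, Finset.mem_range, Finset.mem_Ico]
    constructor
    · rintro ⟨h1, h2⟩; exact ⟨h2, h1⟩
    · rintro ⟨h1, h2⟩; exact ⟨h2, h1⟩
  have step1 : ∑ j ∈ range n, (((j:ℝ)+1)/(n:ℝ)) * g j
      ≤ ((a:ℝ)/n) * (∑ j ∈ range n, g j) + ∑ j ∈ Ico a n, (((j:ℝ)+1-(a:ℝ))/n) * g j := by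
    rw [Finset.mul_sum, ← hIco, Finset.sum_filter, ← Finset.sum_add_distrib]
    apply Finset.sum_le_sum
    intro j hj
    by_cases haj : a ≤ j
    · rw [if_pos haj]
      have e : (((j:ℝ)+1)/(n:ℝ)) = (a:ℝ)/n + (((j:ℝ)+1-(a:ℝ))/n) := by ring
      rw [e, add_mul]
    · rw [if_neg haj, add_zero]
      apply mul_le_mul_of_nonneg_right _ (hg0 j)
      have hja : ((j:ℝ)+1) ≤ (a:ℝ) := by exact_mod_cast (show j+1 ≤ a by omega)
      gcongr
  have step2 : ∑ j ∈ Ico a n, (((j:ℝ)+1-(a:ℝ))/n) * g j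
      ≤ ((n:ℝ)-(a:ℝ))/n - (a:ℝ)/n * T a := by
    have hterm : ∀ j ∈ Ico a n, (((j:ℝ)+1-(a:ℝ))/n) * g j
        ≤ 1/(n:ℝ) - (a:ℝ)/n * (1/((j:ℝ)+1)) := by
      intro j hj
      obtain ⟨hja, hjn⟩ := Finset.mem_Ico.mp hj
      have hja' : (a:ℝ) ≤ j := by exact_mod_cast hja
      have h1 : (((j:ℝ)+1-(a:ℝ))/n) * g j ≤ (((j:ℝ)+1-(a:ℝ))/n) * (1/((j:ℝ)+1)) := by
        apply mul_le_mul_of_nonneg_left (gle j)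
        apply div_nonneg _ hn0.le
        linarith
      have h2 : (((j:ℝ)+1-(a:ℝ))/n) * (1/((j:ℝ)+1)) = 1/(n:ℝ) - (a:ℝ)/n * (1/((j:ℝ)+1)) := by
        have hj1 : ((j:ℝ)+1) ≠ 0 := by positivity
        field_simp
      linarith
    calc ∑ j ∈ Ico a n, (((j:ℝ)+1-(a:ℝ))/n) * g j
        ≤ ∑ j ∈ Ico a n, (1/(n:ℝ) - (a:ℝ)/n * (1/((j:ℝ)+1))) := Finset.sum_le_sum hterm
    _ = ((n:ℝ)-(a:ℝ))/n - (a:ℝ)/n * T a := by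
        rw [Finset.sum_sub_distrib, ← Finset.mul_sum, Finset.sum_const, Nat.card_Ico]
        have e : ((n-a:ℕ):ℝ) = (n:ℝ) - a := by push_cast [Nat.cast_sub han]; ring
        rw [nsmul_eq_mul, e]
        have : (∑ j ∈ Ico a n, 1/((j:ℝ)+1)) = T a := rfl
        rw [this]
        ring
  have hga : (0:ℝ) ≤ (a:ℝ)/n := by positivity
  have dual : ∑ j ∈ range n, (((j:ℝ)+1)/(n:ℝ)) * g j
      ≤ ((a:ℝ)*k + ((n:ℝ) - a) - (a:ℝ) * T a)/n := by
    have h1 : ((a:ℝ)/n) * (∑ j ∈ range n, g j) ≤ ((a:ℝ)/n) * k :=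
      mul_le_mul_of_nonneg_left hsum hga
    have e : ((a:ℝ)*k + ((n:ℝ) - a) - (a:ℝ) * T a)/n
        = ((a:ℝ)/n) * k + (((n:ℝ)-(a:ℝ))/n - (a:ℝ)/n * T a) := by ring
    rw [e]
    linarith
  have rhs : (1 + 1/(n:ℝ)) * (1 - Real.exp (-(k:ℝ)))
      = (((n:ℝ)+1) * (1 - Real.exp (-(k:ℝ))))/n := by
    field_simp
  rw [rhs]
  refine le_trans dual ?_
  have hXY : ((a:ℝ)*k + ((n:ℝ) - a) - (a:ℝ) * T a) ≤ ((n:ℝ)+1) * (1 - Real.exp (-(k:ℝ))) := by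
    nlinarith [hmain]
  rw [div_le_div_iff₀ hn0 hn0]
  nlinarith [mul_le_mul_of_nonneg_right hXY hn0.le]

set_option maxHeartbeats 2000000 in
lemma core {n k : ℕ} (hn : 1 ≤ n) (hk : 1 ≤ k) (Alg : RankAlg n k) (v : Fin n → ℝ)
    (hv : StrictMono v) (istar : Fin n) (htop : ∀ a : Fin n, a ≤ istar) (u : ℝ) :
    ((n.factorial : ℝ))⁻¹ * ∑ σ : Equiv.Perm (Fin n),
        (if σ.symm istar ∈ Alg.run u (fun i => v (σ i)) then (1:ℝ) else 0) ≤
      (1 + 1/(n:ℝ)) * (1 - Real.exp (-(k:ℝ))) := by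
  classical
  have hn0 : (0:ℝ) < n := by exact_mod_cast hn
  have hfac : (0:ℝ) < (n.factorial : ℝ) := by exact_mod_cast n.factorial_pos
  set A : Fin n → Finset (Equiv.Perm (Fin n)) := fun p => (univ.filter
      (fun σ => σ p = istar ∧ p ∈ Alg.run u (fun i => v (σ i)))) with hAdef
  set B : Fin n → Finset (Equiv.Perm (Fin n)) := fun p => (univ.filter
      (fun σ => p ∈ Alg.run u (fun i => v (σ i)) ∧ ∀ j ≤ p, σ j ≤ σ p)) with hBdef
  have hsum1 : ∑ σ : Equiv.Perm (Fin n),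
      (if σ.symm istar ∈ Alg.run u (fun i => v (σ i)) then (1:ℝ) else 0)
      = ∑ p : Fin n, ((A p).card : ℝ) := by
    have h1 : ∀ σ : Equiv.Perm (Fin n),
        (if σ.symm istar ∈ Alg.run u (fun i => v (σ i)) then (1:ℝ) else 0)
        = ∑ p : Fin n, (if σ p = istar ∧ p ∈ Alg.run u (fun i => v (σ i)) then (1:ℝ) else 0) := by
      intro σ
      rw [Finset.sum_eq_single (σ.symm istar)]
      · simp [Equiv.apply_symm_apply]
      · intro p _ hp
        rw [if_neg]
        rintro ⟨h1, -⟩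
        exact hp (by rw [← h1, Equiv.symm_apply_apply])
      · intro h; exact absurd (Finset.mem_univ _) h
    rw [Finset.sum_congr rfl (fun σ _ => h1 σ), Finset.sum_comm]
    apply Finset.sum_congr rfl
    intro p _
    rw [Finset.sum_boole]
  have hkey : ∀ p : Fin n, ((A p).card : ℝ) ≤ ((p.1 : ℝ) + 1) * ((B p).card : ℝ) / n := by
    intro p
    have hnat := key Alg v hv istar htop u p
    rw [le_div_iff₀ hn0]
    calc ((A p).card : ℝ) * n = ((n * (A p).card : ℕ) : ℝ) := by push_cast; ring
    _ ≤ (((p.1 + 1) * (B p).card : ℕ) : ℝ) := by exact_mod_cast hnat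
    _ = ((p.1 : ℝ) + 1) * ((B p).card : ℝ) := by push_cast; ring
  set g : ℕ → ℝ := fun j => if hj : j < n then ((B ⟨j, hj⟩).card : ℝ)/(n.factorial : ℝ) else 0
    with hgdef
  have hgval : ∀ p : Fin n, g p.1 = ((B p).card : ℝ)/(n.factorial : ℝ) := by
    intro p
    rw [hgdef]
    simp only [p.2, dif_pos, Fin.eta]
  have hg0 : ∀ j : ℕ, 0 ≤ g j := by
    intro j
    by_cases hj : j < n
    · rw [show g j = ((B ⟨j, hj⟩).card : ℝ)/(n.factorial : ℝ) from hgval ⟨j, hj⟩]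
      positivity
    · have hz : g j = 0 := by simp only [hgdef]; rw [dif_neg hj]
      rw [hz]
  have hBsubTop : ∀ p : Fin n, (B p).card ≤ ((univ : Finset (Equiv.Perm (Fin n))).filter
      (fun σ => ∀ j ≤ p, σ j ≤ σ p)).card := by
    intro p
    apply Finset.card_le_card
    intro σ hσ
    rw [Finset.mem_filter] at hσ ⊢
    exact ⟨hσ.1, hσ.2.2⟩
  have hg1 : ∀ j : ℕ, ((j:ℝ)+1) * g j ≤ 1 := by
    intro j
    by_cases hj : j < n
    · have hp : ((⟨j, hj⟩ : Fin n).1 + 1) * (B ⟨j, hj⟩).card ≤ n.factorial :=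
        le_trans (Nat.mul_le_mul_left _ (hBsubTop ⟨j, hj⟩)) (topcount ⟨j, hj⟩)
      have : g j = ((B ⟨j, hj⟩).card : ℝ)/(n.factorial : ℝ) := hgval ⟨j, hj⟩
      rw [this, mul_div_assoc', div_le_one hfac]
      exact_mod_cast hp
    · have hz : g j = 0 := by simp only [hgdef]; rw [dif_neg hj]
      rw [hz]
      norm_num
  have hgsum : ∑ j ∈ range n, g j ≤ (k:ℝ) := by
    have hnatsum : ∑ p : Fin n, (B p).card ≤ k * n.factorial := by
      have h1 : ∀ p : Fin n, (B p).card = ∑ σ : Equiv.Perm (Fin n),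
          (if p ∈ Alg.run u (fun i => v (σ i)) ∧ ∀ j ≤ p, σ j ≤ σ p then 1 else 0) := by
        intro p
        rw [hBdef]
        rw [Finset.card_filter]
      rw [Finset.sum_congr rfl (fun p _ => h1 p), Finset.sum_comm]
      have h2 : ∀ σ : Equiv.Perm (Fin n), (∑ p : Fin n,
          if p ∈ Alg.run u (fun i => v (σ i)) ∧ ∀ j ≤ p, σ j ≤ σ p then 1 else 0) ≤ k := by
        intro σ
        rw [← Finset.card_filter]
        refine le_trans (Finset.card_le_card ?_) (Alg.card_le u (fun i => v (σ i)))
        intro p hp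
        exact (Finset.mem_filter.mp hp).2.1
      calc ∑ σ : Equiv.Perm (Fin n), (∑ p : Fin n,
            if p ∈ Alg.run u (fun i => v (σ i)) ∧ ∀ j ≤ p, σ j ≤ σ p then 1 else 0)
          ≤ ∑ _σ : Equiv.Perm (Fin n), k := Finset.sum_le_sum (fun σ _ => h2 σ)
      _ = (Fintype.card (Fin n)).factorial * k := by
          rw [Finset.sum_const, Finset.card_univ, Fintype.card_perm, smul_eq_mul]
      _ = k * n.factorial := by rw [Fintype.card_fin, Nat.mul_comm]
    rw [← Fin.sum_univ_eq_sum_range g n]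
    rw [Finset.sum_congr rfl (fun p _ => hgval p), ← Finset.sum_div, div_le_iff₀ hfac]
    calc ∑ p : Fin n, ((B p).card : ℝ) = ((∑ p : Fin n, (B p).card : ℕ) : ℝ) := by push_cast; rfl
    _ ≤ ((k * n.factorial : ℕ) : ℝ) := by exact_mod_cast hnatsum
    _ = (k : ℝ) * (n.factorial : ℝ) := by push_cast; ring
  calc ((n.factorial : ℝ))⁻¹ * ∑ σ : Equiv.Perm (Fin n),
        (if σ.symm istar ∈ Alg.run u (fun i => v (σ i)) then (1:ℝ) else 0)
      = ((n.factorial : ℝ))⁻¹ * ∑ p : Fin n, ((A p).card : ℝ) := by rw [hsum1]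
  _ ≤ ((n.factorial : ℝ))⁻¹ * ∑ p : Fin n, ((p.1 : ℝ) + 1) * ((B p).card : ℝ) / n := by
      apply mul_le_mul_of_nonneg_left (Finset.sum_le_sum (fun p _ => hkey p))
        (inv_nonneg.mpr hfac.le)
  _ = ∑ j ∈ range n, (((j:ℝ)+1)/(n:ℝ)) * g j := by
      rw [Finset.mul_sum, ← Fin.sum_univ_eq_sum_range (fun j => (((j:ℝ)+1)/(n:ℝ)) * g j) n]
      apply Finset.sum_congr rfl
      intro p _
      rw [hgval p]
      ring
  _ ≤ (1 + 1/(n:ℝ)) * (1 - Real.exp (-(k:ℝ))) := lp_bound n k hn hk g hg0 hg1 hgsum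

lemma pointwise {n k : ℕ} (hn : 1 ≤ n) (hk : 1 ≤ k) (Alg : RankAlg n k) (v : Fin n → ℝ)
    (hv : Function.Injective v) (istar : Fin n) (hmax : ∀ j, v j ≤ v istar) (u : ℝ) :
    ((n.factorial : ℝ))⁻¹ * ∑ σ : Equiv.Perm (Fin n),
        (if σ.symm istar ∈ Alg.run u (fun i => v (σ i)) then (1:ℝ) else 0) ≤
      (1 + 1/(n:ℝ)) * (1 - Real.exp (-(k:ℝ))) := by
  classical
  set ord := Tuple.sort v with hord
  have hmono : StrictMono (fun i => v (ord i)) := by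
    have h1 : Monotone (v ∘ ord) := Tuple.monotone_sort v
    exact h1.strictMono_of_injective (hv.comp ord.injective)
  set istar' := ord.symm istar with histar'
  have htop' : ∀ a : Fin n, a ≤ istar' := by
    intro a
    by_contra hlt
    push_neg at hlt
    have h2 := hmono hlt
    simp only [] at h2
    rw [histar', Equiv.apply_symm_apply] at h2
    exact absurd (hmax (ord a)) (not_le.mpr h2)
  have hre : ∑ σ : Equiv.Perm (Fin n),
      (if σ.symm istar ∈ Alg.run u (fun i => v (σ i)) then (1:ℝ) else 0)
      = ∑ ρ : Equiv.Perm (Fin n),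
      (if ρ.symm istar' ∈ Alg.run u (fun i => v (ord (ρ i))) then (1:ℝ) else 0) := by
    rw [← Equiv.sum_comp (Equiv.mulLeft ord)
      (fun σ : Equiv.Perm (Fin n) =>
        if σ.symm istar ∈ Alg.run u (fun i => v (σ i)) then (1:ℝ) else 0)]
    apply Finset.sum_congr rfl
    intro ρ _
    rfl
  rw [hre]
  exact core hn hk Alg (fun i => v (ord i)) hmono istar' htop' u

end SecAux

/-- **Secretary upper bound (Lemma 3.5 of Ezra–Feldman–Nehama).**
For any injective nonnegative value vector arriving in uniformly random order, no randomized
rank-based online algorithm that accepts at most `k` arrivals accepts the arrival carrying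
the maximum value with probability greater than `(1 + 1/n)·(1 − e^{−k})`. -/
theorem secretary_max_accept_prob (n k : ℕ) (hn : 1 ≤ n) (hk : 1 ≤ k)
    (Alg : RankAlg n k)
    (v : Fin n → ℝ) (hv : Function.Injective v) (hvnn : ∀ i, 0 ≤ v i)
    (istar : Fin n) (hmax : ∀ j, v j ≤ v istar) :
    (∫ u in Set.Icc (0 : ℝ) 1, ((n.factorial : ℝ))⁻¹ *
        ∑ σ : Equiv.Perm (Fin n),
          (if σ.symm istar ∈ Alg.run u (fun i => v (σ i)) then (1 : ℝ) else 0)) ≤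
      (1 + 1 / (n : ℝ)) * (1 - Real.exp (-(k : ℝ))) := by
  classical
  set C := (1 + 1 / (n : ℝ)) * (1 - Real.exp (-(k : ℝ))) with hC
  have hC0 : 0 ≤ C := by
    rw [hC]
    apply mul_nonneg
    · have h1 : (0:ℝ) ≤ 1/(n:ℝ) := by positivity
      linarith
    · have h2 : Real.exp (-(k:ℝ)) ≤ 1 := by
        rw [Real.exp_le_one_iff]
        simp
      linarith
  set f : ℝ → ℝ := fun u => ((n.factorial : ℝ))⁻¹ *
      ∑ σ : Equiv.Perm (Fin n),
        (if σ.symm istar ∈ Alg.run u (fun i => v (σ i)) then (1 : ℝ) else 0) with hf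
  have hpt : ∀ u : ℝ, f u ≤ C := fun u => SecAux.pointwise hn hk Alg v hv istar hmax u
  by_cases hint : MeasureTheory.IntegrableOn f (Set.Icc (0:ℝ) 1) MeasureTheory.volume
  · have h1 : (∫ u in Set.Icc (0:ℝ) 1, f u) ≤ ∫ _u in Set.Icc (0:ℝ) 1, C := by
      apply MeasureTheory.setIntegral_mono_on hint ?_ measurableSet_Icc (fun u _ => hpt u)
      apply (MeasureTheory.integrableOn_const_iff (C := C)).mpr
      right
      rw [Real.volume_Icc]
      exact ENNReal.ofReal_lt_top
    have h2 : (∫ _u in Set.Icc (0:ℝ) 1, C) = C := by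
      rw [MeasureTheory.setIntegral_const, Real.volume_real_Icc]
      norm_num
    rw [h2] at h1
    exact h1
  · rw [MeasureTheory.integral_undef hint]
    exact hC0
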